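/- If H = (V, E) is an n-uniform intersecting family with covering number τ(H) = n, then the triple (V, E, E) is a critical cross-intersecting family, i.e., for every e ∈ E and every v ∈ e there exists f ∈ E with e ∩ f = {v}. -/

import Mathlib

/-- an `n`-uniform intersecting family with covering number exactly `n`
yields a critical cross-intersecting family `(V, E, E)`: for every edge `e` and every
`v ∈ e` there is an edge `f` with `e ∩ f = {v}`. -/
theorem stmt7 {V : Type*} [DecidableEq V]
    (E : Finset (Finset V)) (n : ℕ)
    (hne : E.Nonempty)
    (hunif : ∀ e ∈ E, e.card = n)
    (hint : ∀ e ∈ E, ∀ f ∈ E, (e ∩ f).Nonempty)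
    (htau : IsLeast {m : ℕ | ∃ T : Finset V, T.card = m ∧ ∀ e ∈ E, (e ∩ T).Nonempty} n) :
    ∀ e ∈ E, ∀ v ∈ e, ∃ f ∈ E, e ∩ f = {v} := by
  intro e he v hv
  have hn : e.card = n := hunif e he
  have hn1 : 1 ≤ n := by
    rw [← hn]; exact Finset.card_pos.mpr ⟨v, hv⟩
  -- T = e \ {v} has card n - 1 < n, so it's not a cover
  have hTcard : (e \ {v}).card = n - 1 := by
    rw [Finset.card_sdiff_of_subset (Finset.singleton_subset_iff.mpr hv), Finset.card_singleton, hn]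
  have hnotcover : ¬ ∀ f ∈ E, (f ∩ (e \ {v})).Nonempty := by
    intro hcov
    have : n ≤ n - 1 := htau.2 ⟨e \ {v}, hTcard, hcov⟩
    omega
  push_neg at hnotcover
  obtain ⟨f, hf, hfe⟩ := hnotcover
  refine ⟨f, hf, ?_⟩
  obtain ⟨w, hw⟩ := hint e he f hf
  apply Finset.eq_singleton_iff_unique_mem.mpr
  constructor
  · have hwv : w = v := by
      by_contra hne'
      have : w ∈ f ∩ (e \ {v}) := by
        simp only [Finset.mem_inter, Finset.mem_sdiff, Finset.mem_singleton] at hw ⊢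
        exact ⟨hw.2, hw.1, hne'⟩
      rw [hfe] at this; exact absurd this (Finset.notMem_empty w)
    subst hwv
    exact hw
  · intro x hx
    by_contra hne'
    simp only [Finset.mem_inter] at hx
    have : x ∈ f ∩ (e \ {v}) := by
      simp only [Finset.mem_inter, Finset.mem_sdiff, Finset.mem_singleton]
      exact ⟨hx.2, hx.1, hne'⟩
    rw [hfe] at this; exact absurd this (Finset.notMem_empty x)
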